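/- Let η, τ, be real numbers with 0 < η < 1 and τ > 0, let α be a nonzero complex number, let n be an integer, and set Ω₀ = (2n+1)π/τ. Then the limit as ω → 0 (ω ≠ 0) of (ω²/(2|α|²)) · [ (1/√η − √η)² / (4 cos²((Ω₀ + ω)τ/2)) + 1/2 ] equals (1 − η)² / (2 η τ² |α|²). -/

import Mathlib

open Filter Real

lemma sin_div_self_tendsto : Filter.Tendsto (fun x : ℝ => Real.sin x / x)
    (nhdsWithin 0 {(0:ℝ)}ᶜ) (nhds 1) := by
  have h := (Real.hasDerivAt_sin 0)
  rw [hasDerivAt_iff_tendsto_slope] at h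
  simp only [Real.cos_zero] at h
  refine h.congr' ?_
  filter_upwards [self_mem_nhdsWithin] with x hx
  simp [slope_def_field, div_eq_div_iff]

lemma key_limit (τ : ℝ) (hτ : 0 < τ) :
    Filter.Tendsto (fun ω : ℝ => ω / (2 * Real.sin (ω * τ / 2)))
      (nhdsWithin 0 {(0:ℝ)}ᶜ) (nhds (1 / τ)) := by
  have hmap : Filter.Tendsto (fun ω : ℝ => ω * τ / 2)
      (nhdsWithin 0 {(0:ℝ)}ᶜ) (nhdsWithin 0 {(0:ℝ)}ᶜ) := by
    apply tendsto_nhdsWithin_of_tendsto_nhds_of_eventually_within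
    · have : Filter.Tendsto (fun ω : ℝ => ω * τ / 2) (nhds 0) (nhds (0 * τ / 2)) := by
        exact (tendsto_id.mul_const τ).div_const 2
      simpa using this.mono_left nhdsWithin_le_nhds
    · filter_upwards [self_mem_nhdsWithin] with ω hω
      simp only [Set.mem_compl_iff, Set.mem_singleton_iff] at hω ⊢
      intro h
      rcases mul_eq_zero.1 (by linarith [(div_eq_zero_iff.1 h)] : ω * τ = 0) with h1 | h1
      · exact hω h1
      · exact absurd h1 (ne_of_gt hτ)
  have t1 : Filter.Tendsto (fun ω : ℝ => Real.sin (ω * τ / 2) / (ω * τ / 2))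
      (nhdsWithin 0 {(0:ℝ)}ᶜ) (nhds 1) := sin_div_self_tendsto.comp hmap
  have t2 : Filter.Tendsto (fun ω : ℝ => 2 * Real.sin (ω * τ / 2) / ω)
      (nhdsWithin 0 {(0:ℝ)}ᶜ) (nhds τ) := by
    have := t1.const_mul τ
    rw [mul_one] at this
    refine this.congr' ?_
    filter_upwards [self_mem_nhdsWithin] with ω hω
    have hω0 : ω ≠ 0 := hω
    field_simp
  have t3 := t2.inv₀ (ne_of_gt hτ)
  rw [one_div]
  refine t3.congr' ?_
  filter_upwards with ω
  rw [inv_div]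

theorem stmt_6 (η τ : ℝ) (hη0 : 0 < η) (hη1 : η < 1) (hτ : 0 < τ)
    (α : ℂ) (hα : α ≠ 0) (n : ℤ) (Ω₀ : ℝ) (hΩ₀ : Ω₀ = (2 * n + 1) * Real.pi / τ) :
    Filter.Tendsto
      (fun ω : ℝ =>
        (ω ^ 2 / (2 * ‖α‖ ^ 2)) *
          ((1 / Real.sqrt η - Real.sqrt η) ^ 2
              / (4 * Real.cos ((Ω₀ + ω) * τ / 2) ^ 2) + 1 / 2))
      (nhdsWithin 0 {(0 : ℝ)}ᶜ)
      (nhds ((1 - η) ^ 2 / (2 * η * τ ^ 2 * ‖α‖ ^ 2))) := by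
  set A := ‖α‖ ^ 2 with hAdef
  have hAb : 0 < ‖α‖ := norm_pos_iff.mpr hα
  have hA : 0 < A := by rw [hAdef]; positivity
  set c := (1 / Real.sqrt η - Real.sqrt η) ^ 2 with hcdef
  -- cos squared identity
  have hsq : ∀ ω : ℝ, Real.cos ((Ω₀ + ω) * τ / 2) ^ 2 = Real.sin (ω * τ / 2) ^ 2 := by
    intro ω
    have harg : (Ω₀ + ω) * τ / 2 = (2 * n + 1) * Real.pi / 2 + ω * τ / 2 := by
      rw [hΩ₀]; field_simp
    have hc0 : Real.cos ((2 * (n:ℝ) + 1) * Real.pi / 2) = 0 :=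
      Real.cos_eq_zero_iff.2 ⟨n, by norm_num⟩
    have hs1 : Real.sin ((2 * (n:ℝ) + 1) * Real.pi / 2) ^ 2 = 1 := by
      have := Real.sin_sq_add_cos_sq ((2 * (n:ℝ) + 1) * Real.pi / 2)
      nlinarith
    rw [harg, Real.cos_add, hc0, zero_mul, zero_sub, neg_sq, mul_pow, hs1, one_mul]
  -- pointwise rewrite of the function
  have hfun : ∀ ω : ℝ,
      (ω ^ 2 / (2 * A)) * (c / (4 * Real.cos ((Ω₀ + ω) * τ / 2) ^ 2) + 1 / 2)
        = (c / (2 * A)) * (ω / (2 * Real.sin (ω * τ / 2))) ^ 2 + ω ^ 2 / (4 * A) := by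
    intro ω
    rw [hsq ω]
    ring
  have hckey : Filter.Tendsto (fun ω : ℝ => (c / (2 * A)) * (ω / (2 * Real.sin (ω * τ / 2))) ^ 2
        + ω ^ 2 / (4 * A)) (nhdsWithin 0 {(0:ℝ)}ᶜ)
      (nhds ((c / (2 * A)) * (1 / τ) ^ 2 + 0)) := by
    refine Filter.Tendsto.add ?_ ?_
    · exact ((key_limit τ hτ).pow 2).const_mul _
    · have : Filter.Tendsto (fun ω : ℝ => ω ^ 2 / (4 * A)) (nhds 0) (nhds ((0:ℝ)^2 / (4*A))) := by
        exact (tendsto_id.pow 2).div_const (4 * A)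
      simpa using this.mono_left nhdsWithin_le_nhds
  have heq : (c / (2 * A)) * (1 / τ) ^ 2 + 0 = (1 - η) ^ 2 / (2 * η * τ ^ 2 * A) := by
    have hsη : Real.sqrt η * Real.sqrt η = η := Real.mul_self_sqrt hη0.le
    have hsηne : Real.sqrt η ≠ 0 := by positivity
    have h1 : 1 / Real.sqrt η - Real.sqrt η = (1 - η) / Real.sqrt η := by
      field_simp
      rw [sq, hsη]
    rw [hcdef, h1, div_pow, sq (Real.sqrt η), hsη, add_zero]
    field_simp [hη0.ne', hτ.ne', hA.ne']
  rw [← heq]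
  exact hckey.congr (fun ω => (hfun ω).symm)
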